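/- Let $h \in (0, 1/2]$ and let $\beta \in [-1,1]$. Define $u_h:[-1,1]\to\mathbb{R}$ to be the continuous piecewise linear function on the mesh $\{-1,-h,0,h,1\}$ with nodal values $u_h(-1)=-1$, $u_h(-h)=-1$, $u_h(0)=\beta$, $u_h(h)=1$, $u_h(1)=1$. Then $u_h$ minimizes $\int_{-1}^1 |\mathrm{sgn}(x) - v(x)|\,dx$ over all continuous piecewise linear $v$ on this mesh with $v(-1)=-1$ and $v(1)=1$. -/

import Mathlib

open MeasureTheory

/-- Linear interpolation between `(x0, y0)` and `(x1, y1)`. -/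
noncomputable def interp (x0 x1 y0 y1 x : ℝ) : ℝ :=
  y0 + (y1 - y0) * (x - x0) / (x1 - x0)

/-- Continuous piecewise linear function on the mesh `{-1, -h, 0, h, 1}` with
nodal values `a, b, c, d, e`. -/
noncomputable def mesh4 (h a b c d e : ℝ) (x : ℝ) : ℝ :=
  if x ≤ -h then interp (-1) (-h) a b x
  else if x ≤ 0 then interp (-h) 0 b c x
  else if x ≤ h then interp 0 h c d x
  else interp h 1 d e x

private lemma integral_linear (p q a b : ℝ) :
    ∫ x in a..b, (p + q * x) = p * (b - a) + q * (b ^ 2 - a ^ 2) / 2 := by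
  rw [intervalIntegral.integral_add intervalIntegrable_const
      ((by fun_prop : Continuous fun x : ℝ => q * x).intervalIntegrable a b),
    intervalIntegral.integral_const, intervalIntegral.integral_const_mul,
    integral_id]
  simp only [smul_eq_mul]
  ring

private lemma continuous_interp (x0 x1 y0 y1 : ℝ) : Continuous (interp x0 x1 y0 y1) := by
  unfold interp
  exact continuous_const.add ((continuous_const.mul (continuous_id.sub continuous_const)).div_const _)

private lemma interp_eq (x0 x1 y0 y1 : ℝ) (hx : x1 - x0 ≠ 0) (x : ℝ) :
    interp x0 x1 y0 y1 x =
      (y0 - (y1 - y0) * x0 / (x1 - x0)) + ((y1 - y0) / (x1 - x0)) * x := by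
  unfold interp; field_simp; ring

private lemma integral_interp (x0 x1 y0 y1 a b : ℝ) (hx : x1 - x0 ≠ 0) :
    ∫ x in a..b, interp x0 x1 y0 y1 x =
      (y0 - (y1 - y0) * x0 / (x1 - x0)) * (b - a)
        + ((y1 - y0) / (x1 - x0)) * (b ^ 2 - a ^ 2) / 2 := by
  rw [intervalIntegral.integral_congr (g := fun x =>
      (y0 - (y1 - y0) * x0 / (x1 - x0)) + ((y1 - y0) / (x1 - x0)) * x)
    (fun x _ => interp_eq x0 x1 y0 y1 hx x)]
  exact integral_linear _ _ _ _

private lemma integral_const_sub_interp (s x0 x1 y0 y1 a b : ℝ) (hx : x1 - x0 ≠ 0) :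
    ∫ x in a..b, (s - interp x0 x1 y0 y1 x) =
      s * (b - a) - ((y0 - (y1 - y0) * x0 / (x1 - x0)) * (b - a)
        + ((y1 - y0) / (x1 - x0)) * (b ^ 2 - a ^ 2) / 2) := by
  rw [intervalIntegral.integral_sub intervalIntegrable_const
      ((continuous_interp _ _ _ _).intervalIntegrable a b),
    intervalIntegral.integral_const, integral_interp _ _ _ _ _ _ hx]
  simp [smul_eq_mul]
  ring

private lemma piece_eq {f g : ℝ → ℝ} {a b : ℝ} (hg : Continuous g)
    (hfg : ∀ᵐ x, x ∈ Set.uIoc a b → f x = g x) :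
    IntervalIntegrable f volume a b ∧ (∫ x in a..b, f x) = ∫ x in a..b, g x :=
  ⟨(hg.intervalIntegrable a b).congr_ae
      (((ae_restrict_iff' measurableSet_uIoc).mpr hfg).mono fun _ hx => hx.symm),
   intervalIntegral.integral_congr_ae hfg⟩

private lemma mul_le_abs' {c t : ℝ} (hc : |c| ≤ 1) : c * t ≤ |t| := by
  calc c * t ≤ |c * t| := le_abs_self _
    _ = |c| * |t| := abs_mul c t
    _ ≤ 1 * |t| := mul_le_mul_of_nonneg_right hc (abs_nonneg t)
    _ = |t| := one_mul _

private lemma weighted_le {a b : ℝ} (hab : a ≤ b) {c : ℝ} (hc : |c| ≤ 1)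
    {g : ℝ → ℝ} (hg : Continuous g) :
    c * ∫ x in a..b, g x ≤ ∫ x in a..b, |g x| := by
  rw [← intervalIntegral.integral_const_mul]
  exact intervalIntegral.integral_mono_on hab
    ((continuous_const.mul hg).intervalIntegrable _ _)
    (hg.abs.intervalIntegrable _ _) (fun x _ => mul_le_abs' hc)

private lemma split4 (h : ℝ) (hh0 : 0 < h) (hh : h ≤ 1 / 2) (b c d : ℝ) :
    (∫ x in (-1:ℝ)..1, |Real.sign x - mesh4 h (-1) b c d 1 x|) =
      (∫ x in (-1:ℝ)..(-h), |(-1:ℝ) - interp (-1) (-h) (-1) b x|)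
      + ((∫ x in (-h:ℝ)..0, |(-1:ℝ) - interp (-h) 0 b c x|)
      + ((∫ x in (0:ℝ)..h, |(1:ℝ) - interp 0 h c d x|)
      + (∫ x in (h:ℝ)..1, |(1:ℝ) - interp h 1 d 1 x|))) := by
  have h1 : h < 1 := lt_of_le_of_lt hh (by norm_num)
  have o1 : (-1:ℝ) ≤ -h := by linarith
  have o2 : (-h:ℝ) ≤ 0 := by linarith
  have o3 : (0:ℝ) ≤ h := le_of_lt hh0
  have o4 : h ≤ 1 := le_of_lt h1
  set f : ℝ → ℝ := fun x => |Real.sign x - mesh4 h (-1) b c d 1 x| with hf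
  have h0 : ∀ᵐ x : ℝ, x ≠ 0 := by
    have := (Set.countable_singleton (0:ℝ)).ae_notMem (volume : Measure ℝ)
    filter_upwards [this] with x hx
    simpa using hx
  have p1 := piece_eq (f := f) (g := fun x => |(-1:ℝ) - interp (-1) (-h) (-1) b x|) (a := -1) (b := -h)
    ((continuous_const.sub (continuous_interp (-1) (-h) (-1) b)).abs)
    (by
      filter_upwards with x hx
      rw [Set.uIoc_of_le o1] at hx
      have hx2 : x ≤ -h := hx.2
      have hxneg : x < 0 := lt_of_le_of_lt hx2 (by linarith)
      simp [hf, mesh4, hx2, Real.sign_of_neg hxneg])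
  have p2 := piece_eq (f := f) (g := fun x => |(-1:ℝ) - interp (-h) 0 b c x|) (a := -h) (b := 0)
    ((continuous_const.sub (continuous_interp (-h) 0 b c)).abs)
    (by
      filter_upwards [h0] with x hx0 hx
      rw [Set.uIoc_of_le o2] at hx
      have hx1 : ¬ x ≤ -h := not_le.mpr hx.1
      have hxneg : x < 0 := lt_of_le_of_ne hx.2 hx0
      simp [hf, mesh4, hx1, hx.2, Real.sign_of_neg hxneg])
  have p3 := piece_eq (f := f) (g := fun x => |(1:ℝ) - interp 0 h c d x|) (a := 0) (b := h)
    ((continuous_const.sub (continuous_interp 0 h c d)).abs)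
    (by
      filter_upwards with x hx
      rw [Set.uIoc_of_le o3] at hx
      have hx1 : ¬ x ≤ -h := not_le.mpr (lt_of_lt_of_le (by linarith) (le_of_lt hx.1))
      have hx2 : ¬ x ≤ 0 := not_le.mpr hx.1
      simp [hf, mesh4, hx1, hx2, hx.2, Real.sign_of_pos hx.1])
  have p4 := piece_eq (f := f) (g := fun x => |(1:ℝ) - interp h 1 d 1 x|) (a := h) (b := 1)
    ((continuous_const.sub (continuous_interp h 1 d 1)).abs)
    (by
      filter_upwards with x hx
      rw [Set.uIoc_of_le o4] at hx
      have hxpos : 0 < x := lt_trans hh0 hx.1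
      have hx1 : ¬ x ≤ -h := not_le.mpr (by linarith)
      have hx2 : ¬ x ≤ 0 := not_le.mpr hxpos
      have hx3 : ¬ x ≤ h := not_le.mpr hx.1
      simp [hf, mesh4, hx1, hx2, hx3, Real.sign_of_pos hxpos])
  have sp1 : (∫ x in (-1:ℝ)..1, f x) = (∫ x in (-1:ℝ)..(-h), f x) + ∫ x in (-h:ℝ)..1, f x :=
    (intervalIntegral.integral_add_adjacent_intervals p1.1 ((p2.1.trans p3.1).trans p4.1)).symm
  have sp2 : (∫ x in (-h:ℝ)..1, f x) = (∫ x in (-h:ℝ)..0, f x) + ∫ x in (0:ℝ)..1, f x :=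
    (intervalIntegral.integral_add_adjacent_intervals p2.1 (p3.1.trans p4.1)).symm
  have sp3 : (∫ x in (0:ℝ)..1, f x) = (∫ x in (0:ℝ)..h, f x) + ∫ x in (h:ℝ)..1, f x :=
    (intervalIntegral.integral_add_adjacent_intervals p3.1 p4.1).symm
  rw [sp1, sp2, sp3, p1.2, p2.2, p3.2, p4.2]

theorem stmt9 (h : ℝ) (hh0 : 0 < h) (hh : h ≤ 1 / 2)
    (β : ℝ) (hβ : β ∈ Set.Icc (-1 : ℝ) 1) :
    ∀ b c d : ℝ,
      (∫ x in (-1:ℝ)..1, |Real.sign x - mesh4 h (-1) (-1) β 1 1 x|) ≤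
        ∫ x in (-1:ℝ)..1, |Real.sign x - mesh4 h (-1) b c d 1 x| := by
  intro b c d
  have h1 : h < 1 := lt_of_le_of_lt hh (by norm_num)
  have o1 : (-1:ℝ) ≤ -h := by linarith
  have o2 : (-h:ℝ) ≤ 0 := by linarith
  have o3 : (0:ℝ) ≤ h := le_of_lt hh0
  have o4 : h ≤ 1 := le_of_lt h1
  have hne1 : (-h:ℝ) - (-1) ≠ 0 := by intro hc; nlinarith
  have hne2 : (0:ℝ) - (-h) ≠ 0 := by intro hc; nlinarith
  have hne3 : (h:ℝ) - 0 ≠ 0 := by intro hc; nlinarith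
  have hne4 : (1:ℝ) - h ≠ 0 := by intro hc; nlinarith
  -- LHS = h
  have lhs_eq : (∫ x in (-1:ℝ)..1, |Real.sign x - mesh4 h (-1) (-1) β 1 1 x|) = h := by
    rw [split4 h hh0 hh (-1) β 1]
    have e1 : (∫ x in (-1:ℝ)..(-h), |(-1:ℝ) - interp (-1) (-h) (-1) (-1) x|) = 0 := by
      simp [interp]
    have e4 : (∫ x in (h:ℝ)..1, |(1:ℝ) - interp h 1 1 1 x|) = 0 := by
      simp [interp]
    have e2 : (∫ x in (-h:ℝ)..0, |(-1:ℝ) - interp (-h) 0 (-1) β x|) = (β + 1) * h / 2 := by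
      rw [intervalIntegral.integral_congr
          (g := fun x => (β + 1) + ((β + 1) / h) * x) (fun x hx => by
        rw [Set.uIcc_of_le o2, Set.mem_Icc] at hx
        have hval : (-1:ℝ) - interp (-h) 0 (-1) β x = -((β + 1) + ((β + 1) / h) * x) := by
          unfold interp; field_simp; ring
        rw [hval, abs_neg, abs_of_nonneg]
        have hb1 : 0 ≤ β + 1 := by linarith [hβ.1]
        have : (β + 1) + (β + 1) / h * x = (β + 1) * (x + h) / h := by field_simp; ring
        rw [this]
        exact div_nonneg (mul_nonneg hb1 (by linarith [hx.1, hx.2])) (le_of_lt hh0)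
        )]
      rw [integral_linear]
      field_simp
      ring
    have e3 : (∫ x in (0:ℝ)..h, |(1:ℝ) - interp 0 h β 1 x|) = (1 - β) * h / 2 := by
      rw [intervalIntegral.integral_congr
          (g := fun x => (1 - β) + (-((1 - β) / h)) * x) (fun x hx => by
        rw [Set.uIcc_of_le o3, Set.mem_Icc] at hx
        have hval : (1:ℝ) - interp 0 h β 1 x = (1 - β) + (-((1 - β) / h)) * x := by
          unfold interp; field_simp; ring
        rw [hval, abs_of_nonneg]
        have hb1 : 0 ≤ 1 - β := by linarith [hβ.2]
        have : (1 - β) + -((1 - β) / h) * x = (1 - β) * (h - x) / h := by field_simp; ring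
        rw [this]
        exact div_nonneg (mul_nonneg hb1 (by linarith [hx.1, hx.2])) (le_of_lt hh0)
        )]
      rw [integral_linear]
      field_simp
      ring
    rw [e1, e2, e3, e4]
    ring
  rw [lhs_eq, split4 h hh0 hh b c d]
  -- weights
  have hc1 : |h / (1 - h)| ≤ 1 := by
    rw [abs_of_nonneg (div_nonneg hh0.le (by linarith))]
    rw [div_le_one (by linarith)]
    linarith
  have hc2 : |(-1:ℝ)| ≤ 1 := by norm_num
  have hc3 : |(1:ℝ)| ≤ 1 := by norm_num
  have hc4 : |-(h / (1 - h))| ≤ 1 := by rwa [abs_neg]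
  have w1 := weighted_le o1 hc1 (g := fun x => (-1:ℝ) - interp (-1) (-h) (-1) b x) (continuous_const.sub (continuous_interp (-1) (-h) (-1) b))
  have w2 := weighted_le o2 hc2 (g := fun x => (-1:ℝ) - interp (-h) 0 b c x) (continuous_const.sub (continuous_interp (-h) 0 b c))
  have w3 := weighted_le o3 hc3 (g := fun x => (1:ℝ) - interp 0 h c d x) (continuous_const.sub (continuous_interp 0 h c d))
  have w4 := weighted_le o4 hc4 (g := fun x => (1:ℝ) - interp h 1 d 1 x) (continuous_const.sub (continuous_interp h 1 d 1))
  rw [integral_const_sub_interp _ _ _ _ _ _ _ hne1] at w1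
  rw [integral_const_sub_interp _ _ _ _ _ _ _ hne2] at w2
  rw [integral_const_sub_interp _ _ _ _ _ _ _ hne3] at w3
  rw [integral_const_sub_interp _ _ _ _ _ _ _ hne4] at w4
  have key : h / (1 - h) * ((-1) * (-h - -1) - (((-1:ℝ) - (b - -1) * (-1) / (-h - -1)) * (-h - -1)
        + ((b - -1) / (-h - -1)) * ((-h) ^ 2 - (-1) ^ 2) / 2))
      + ((-1) * ((-1) * (0 - -h) - ((b - (c - b) * (-h) / (0 - -h)) * (0 - -h)
        + ((c - b) / (0 - -h)) * (0 ^ 2 - (-h) ^ 2) / 2))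
      + (1 * (1 * (h - 0) - ((c - (d - c) * 0 / (h - 0)) * (h - 0)
        + ((d - c) / (h - 0)) * (h ^ 2 - 0 ^ 2) / 2))
      + (-(h / (1 - h)) * (1 * (1 - h) - ((d - (1 - d) * h / (1 - h)) * (1 - h)
        + ((1 - d) / (1 - h)) * (1 ^ 2 - h ^ 2) / 2))))) = h := by
    have hh' : h ≠ 0 := ne_of_gt hh0
    have e1 : (-h:ℝ) - -1 = 1 - h := by ring
    have e2 : (0:ℝ) - -h = h := by ring
    have e3 : (h:ℝ) - 0 = h := by ring
    rw [e1, e2, e3]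
    field_simp
    ring
  calc h = _ := key.symm
    _ ≤ _ := by
        exact add_le_add w1 (add_le_add w2 (add_le_add w3 w4))
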